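/- Let d = 3, fix λ > 0, and let S : ℝ → ℝ be continuous on [−12λ, 0] with S(0) = 1, |S(z)| < 1 for all z ∈ [−12λ, 0), and S differentiable at 0 with S′(0) = 1. Then there exists a constant C > 0 (depending only on S and λ) such that for every integer K ≥ 2, with Δt = λ/K² and s_k = −4ΔtK² Σ_{j=1}^3 sin²(π k_j/(2K)), one has Σ_{k ∈ {1,…,K−1}³} 1/(1 − |S(s_k)|) ≤ C·Δt^{−3/2}. -/

import Mathlib

open Real

private lemma sum_rpow_le' (n : ℕ) :
    ∑ k ∈ Finset.Icc 1 n, ((k : ℝ)) ^ (-(2:ℝ)/3) ≤ 3 * (n : ℝ) ^ ((1:ℝ)/3) := by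
  induction n with
  | zero => simp
  | succ n ih =>
    rw [Finset.sum_Icc_succ_top (Nat.one_le_iff_ne_zero.mpr (Nat.succ_ne_zero n))]
    have hb : (0:ℝ) < (n:ℝ) + 1 := by positivity
    have ha : (0:ℝ) ≤ (n:ℝ) := Nat.cast_nonneg n
    have amgm := Real.geom_mean_le_arith_mean3_weighted (by norm_num : (0:ℝ) ≤ 1/3)
      (by norm_num : (0:ℝ) ≤ 1/3) (by norm_num : (0:ℝ) ≤ 1/3) ha hb.le hb.le (by norm_num)
    have hbb : ((n:ℝ)+1) ^ ((1:ℝ)/3) * ((n:ℝ)+1) ^ ((1:ℝ)/3) = ((n:ℝ)+1) ^ ((2:ℝ)/3) := by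
      rw [← Real.rpow_add hb]; norm_num
    have key : (n:ℝ) ^ ((1:ℝ)/3) * ((n:ℝ)+1) ^ ((2:ℝ)/3) ≤ (n:ℝ) + 2/3 := by
      calc (n:ℝ) ^ ((1:ℝ)/3) * ((n:ℝ)+1) ^ ((2:ℝ)/3)
          = (n:ℝ) ^ ((1:ℝ)/3) * ((n:ℝ)+1) ^ ((1:ℝ)/3) * ((n:ℝ)+1) ^ ((1:ℝ)/3) := by
            rw [mul_assoc, hbb]
        _ ≤ 1/3 * (n:ℝ) + 1/3 * ((n:ℝ)+1) + 1/3 * ((n:ℝ)+1) := amgm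
        _ = (n:ℝ) + 2/3 := by ring
    have step : ((n:ℝ)+1) ^ (-(2:ℝ)/3) ≤ 3 * (((n:ℝ)+1) ^ ((1:ℝ)/3) - (n:ℝ) ^ ((1:ℝ)/3)) := by
      have hb23 : (0:ℝ) < ((n:ℝ)+1) ^ ((2:ℝ)/3) := Real.rpow_pos_of_pos hb _
      rw [show -(2:ℝ)/3 = -((2:ℝ)/3) by norm_num, Real.rpow_neg hb.le,
        inv_le_iff_one_le_mul₀ hb23]
      have hsplit : ((n:ℝ)+1) ^ ((1:ℝ)/3) * ((n:ℝ)+1) ^ ((2:ℝ)/3) = (n:ℝ) + 1 := by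
        rw [← Real.rpow_add hb]; norm_num
      nlinarith [key, hsplit]
    have : (3:ℝ) * (n:ℝ) ^ ((1:ℝ)/3) + ((n:ℝ)+1) ^ (-(2:ℝ)/3)
        ≤ 3 * ((n:ℝ)+1) ^ ((1:ℝ)/3) := by linarith
    push_cast
    linarith [ih]

private lemma amgm_denom' (a b c : ℕ) (ha : 1 ≤ a) (hb : 1 ≤ b) (hc : 1 ≤ c) :
    1 / ((a:ℝ)^2 + (b:ℝ)^2 + (c:ℝ)^2)
      ≤ 1/3 * ((a:ℝ) ^ (-(2:ℝ)/3) * ((b:ℝ) ^ (-(2:ℝ)/3) * (c:ℝ) ^ (-(2:ℝ)/3))) := by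
  have ha' : (0:ℝ) < a := by exact_mod_cast ha
  have hb' : (0:ℝ) < b := by exact_mod_cast hb
  have hc' : (0:ℝ) < c := by exact_mod_cast hc
  have h1 : ((a:ℝ)^2) ^ ((1:ℝ)/3) = (a:ℝ) ^ ((2:ℝ)/3) := by
    rw [← Real.rpow_natCast (a:ℝ) 2, ← Real.rpow_mul ha'.le]; norm_num
  have h2 : ((b:ℝ)^2) ^ ((1:ℝ)/3) = (b:ℝ) ^ ((2:ℝ)/3) := by
    rw [← Real.rpow_natCast (b:ℝ) 2, ← Real.rpow_mul hb'.le]; norm_num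
  have h3 : ((c:ℝ)^2) ^ ((1:ℝ)/3) = (c:ℝ) ^ ((2:ℝ)/3) := by
    rw [← Real.rpow_natCast (c:ℝ) 2, ← Real.rpow_mul hc'.le]; norm_num
  have amgm := Real.geom_mean_le_arith_mean3_weighted (by norm_num : (0:ℝ) ≤ 1/3)
    (by norm_num : (0:ℝ) ≤ 1/3) (by norm_num : (0:ℝ) ≤ 1/3)
    (sq_nonneg (a:ℝ)) (sq_nonneg (b:ℝ)) (sq_nonneg (c:ℝ)) (by norm_num)
  rw [h1, h2, h3] at amgm
  have hsum : (0:ℝ) < (a:ℝ)^2 + (b:ℝ)^2 + (c:ℝ)^2 := by positivity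
  have key : 3 * ((a:ℝ) ^ ((2:ℝ)/3) * (b:ℝ) ^ ((2:ℝ)/3) * (c:ℝ) ^ ((2:ℝ)/3))
      ≤ (a:ℝ)^2 + (b:ℝ)^2 + (c:ℝ)^2 := by linarith
  have hneg : ∀ x : ℝ, 0 < x → x ^ (-(2:ℝ)/3) = (x ^ ((2:ℝ)/3))⁻¹ := by
    intro x hx
    rw [show -(2:ℝ)/3 = -((2:ℝ)/3) by norm_num, Real.rpow_neg hx.le]
  rw [hneg _ ha', hneg _ hb', hneg _ hc']
  rw [div_le_iff₀ hsum]
  have base : (1:ℝ) = 1/3 * (((a:ℝ) ^ ((2:ℝ)/3))⁻¹ * (((b:ℝ) ^ ((2:ℝ)/3))⁻¹ * ((c:ℝ) ^ ((2:ℝ)/3))⁻¹))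
      * (3 * ((a:ℝ) ^ ((2:ℝ)/3) * ((b:ℝ) ^ ((2:ℝ)/3) * (c:ℝ) ^ ((2:ℝ)/3)))) := by
    field_simp
  calc (1:ℝ) = 1/3 * (((a:ℝ) ^ ((2:ℝ)/3))⁻¹ * (((b:ℝ) ^ ((2:ℝ)/3))⁻¹ * ((c:ℝ) ^ ((2:ℝ)/3))⁻¹))
      * (3 * ((a:ℝ) ^ ((2:ℝ)/3) * ((b:ℝ) ^ ((2:ℝ)/3) * (c:ℝ) ^ ((2:ℝ)/3)))) := base
    _ ≤ 1/3 * (((a:ℝ) ^ ((2:ℝ)/3))⁻¹ * (((b:ℝ) ^ ((2:ℝ)/3))⁻¹ * ((c:ℝ) ^ ((2:ℝ)/3))⁻¹))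
      * ((a:ℝ)^2 + (b:ℝ)^2 + (c:ℝ)^2) := by
      apply mul_le_mul_of_nonneg_left _ (by positivity)
      linarith [key]

private lemma lattice_sum' (n : ℕ) (hn : 1 ≤ n) :
    ∑ a ∈ Finset.Icc 1 n, ∑ b ∈ Finset.Icc 1 n, ∑ c ∈ Finset.Icc 1 n,
      1 / ((a:ℝ)^2 + (b:ℝ)^2 + (c:ℝ)^2) ≤ 9 * (n:ℝ) := by
  have hsum : ∑ k ∈ Finset.Icc 1 n, ((k : ℝ)) ^ (-(2:ℝ)/3) ≤ 3 * (n : ℝ) ^ ((1:ℝ)/3) :=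
    sum_rpow_le' n
  set f : ℕ → ℝ := fun k => ((k : ℝ)) ^ (-(2:ℝ)/3) with hf
  have hfnn : ∀ k, 0 ≤ f k := fun k => Real.rpow_nonneg (Nat.cast_nonneg k) _
  have step1 : ∑ a ∈ Finset.Icc 1 n, ∑ b ∈ Finset.Icc 1 n, ∑ c ∈ Finset.Icc 1 n,
      1 / ((a:ℝ)^2 + (b:ℝ)^2 + (c:ℝ)^2)
      ≤ ∑ a ∈ Finset.Icc 1 n, ∑ b ∈ Finset.Icc 1 n, ∑ c ∈ Finset.Icc 1 n,
        1/3 * (f a * (f b * f c)) := by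
    apply Finset.sum_le_sum; intro a ha
    apply Finset.sum_le_sum; intro b hb
    apply Finset.sum_le_sum; intro c hc
    exact amgm_denom' a b c (Finset.mem_Icc.mp ha).1 (Finset.mem_Icc.mp hb).1
      (Finset.mem_Icc.mp hc).1
  have step2 : ∑ a ∈ Finset.Icc 1 n, ∑ b ∈ Finset.Icc 1 n, ∑ c ∈ Finset.Icc 1 n,
      1/3 * (f a * (f b * f c))
      = 1/3 * ((∑ k ∈ Finset.Icc 1 n, f k) * ((∑ k ∈ Finset.Icc 1 n, f k)
          * (∑ k ∈ Finset.Icc 1 n, f k))) := by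
    simp only [Finset.mul_sum, Finset.sum_mul]
    refine Finset.sum_congr rfl fun a _ => Finset.sum_congr rfl fun b _ =>
      Finset.sum_congr rfl fun c _ => by ring
  have hS0 : (0:ℝ) ≤ ∑ k ∈ Finset.Icc 1 n, f k := Finset.sum_nonneg fun k _ => hfnn k
  have hnpos : (0:ℝ) < n := by exact_mod_cast hn
  have cube : ((n:ℝ) ^ ((1:ℝ)/3)) * (((n:ℝ) ^ ((1:ℝ)/3)) * ((n:ℝ) ^ ((1:ℝ)/3))) = (n:ℝ) := by
    rw [← Real.rpow_add hnpos, ← Real.rpow_add hnpos]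
    norm_num
  have step3 : 1/3 * ((∑ k ∈ Finset.Icc 1 n, f k) * ((∑ k ∈ Finset.Icc 1 n, f k)
      * (∑ k ∈ Finset.Icc 1 n, f k)))
      ≤ 1/3 * ((3 * (n:ℝ) ^ ((1:ℝ)/3)) * ((3 * (n:ℝ) ^ ((1:ℝ)/3)) * (3 * (n:ℝ) ^ ((1:ℝ)/3)))) := by
    have inner : (∑ k ∈ Finset.Icc 1 n, f k) * (∑ k ∈ Finset.Icc 1 n, f k)
        ≤ (3 * (n:ℝ) ^ ((1:ℝ)/3)) * (3 * (n:ℝ) ^ ((1:ℝ)/3)) :=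
      mul_le_mul hsum hsum hS0 (by positivity)
    have outer := mul_le_mul hsum inner (mul_nonneg hS0 hS0) (by positivity)
    have := mul_le_mul_of_nonneg_left outer (by norm_num : (0:ℝ) ≤ 1/3)
    linarith
  calc _ ≤ _ := step1
    _ = _ := step2
    _ ≤ _ := step3
    _ = 9 * (n:ℝ) := by
      rw [show (3 * (n:ℝ) ^ ((1:ℝ)/3)) * ((3 * (n:ℝ) ^ ((1:ℝ)/3)) * (3 * (n:ℝ) ^ ((1:ℝ)/3)))
          = 27 * (((n:ℝ) ^ ((1:ℝ)/3)) * (((n:ℝ) ^ ((1:ℝ)/3)) * ((n:ℝ) ^ ((1:ℝ)/3)))) from by ring,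
        cube]
      ring

private lemma stab_const' (lam : ℝ) (hlam : 0 < lam) (S : ℝ → ℝ)
    (hcont : ContinuousOn S (Set.Icc (-(12 * lam)) 0))
    (hS0 : S 0 = 1)
    (hSlt : ∀ z ∈ Set.Ico (-(12 * lam)) 0, |S z| < 1)
    (hderiv : HasDerivAt S 1 0) :
    ∃ c > 0, ∀ z ∈ Set.Ico (-(12 * lam)) 0, c * (-z) ≤ 1 - |S z| := by
  have hlo := hasDerivAt_iff_isLittleO.mp hderiv
  have hev : ∀ᶠ z in nhds (0:ℝ), ‖S z - S 0 - (z - 0) • (1:ℝ)‖ ≤ 1/4 * ‖z - 0‖ :=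
    hlo.def (by norm_num)
  rw [Metric.eventually_nhds_iff] at hev
  obtain ⟨δ, hδ, hball⟩ := hev
  set δ₀ : ℝ := min (min δ 1) (12 * lam) with hδ₀def
  have hδ₀pos : 0 < δ₀ := by
    apply lt_min (lt_min hδ one_pos) (by linarith)
  have hδ₀le : δ₀ ≤ 12 * lam := min_le_right _ _
  have part1 : ∀ z : ℝ, -δ₀ < z → z < 0 → (1/4 : ℝ) * (-z) ≤ 1 - |S z| := by
    intro z hz1 hz2
    have hzd : dist z 0 < δ := by
      rw [Real.dist_eq, sub_zero, abs_of_neg hz2]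
      have : δ₀ ≤ δ := le_trans (min_le_left _ _) (min_le_left _ _)
      linarith
    have hb := hball hzd
    simp only [hS0, sub_zero, smul_eq_mul, mul_one, Real.norm_eq_abs] at hb
    have hz1' : -1 ≤ z := by
      have : δ₀ ≤ 1 := le_trans (min_le_left _ _) (min_le_right _ _)
      linarith
    have habs : |z| = -z := abs_of_neg hz2
    rw [habs] at hb
    have h1z : |1 + z| = 1 + z := abs_of_nonneg (by linarith)
    have : |S z| ≤ |1 + z| + |S z - 1 - z| := by
      calc |S z| = |(1 + z) + (S z - 1 - z)| := by ring_nf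
        _ ≤ |1 + z| + |S z - 1 - z| := abs_add_le _ _
    rw [h1z] at this
    linarith
  set A : Set ℝ := Set.Icc (-(12 * lam)) (-δ₀) with hA
  have hAsub : A ⊆ Set.Icc (-(12 * lam)) 0 := by
    apply Set.Icc_subset_Icc le_rfl (by linarith)
  have hAne : A.Nonempty := ⟨-(12 * lam), by constructor <;> [exact le_rfl; linarith]⟩
  have hfc : ContinuousOn (fun z => 1 - |S z|) A :=
    continuousOn_const.sub ((hcont.mono hAsub).abs)
  obtain ⟨z₀, hz₀A, hmin⟩ := isCompact_Icc.exists_isMinOn hAne hfc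
  have hz₀Ico : z₀ ∈ Set.Ico (-(12 * lam)) 0 := ⟨hz₀A.1, by have := hz₀A.2; linarith⟩
  have hm : 0 < 1 - |S z₀| := by have := hSlt z₀ hz₀Ico; linarith
  set m := 1 - |S z₀| with hmdef
  refine ⟨min (1/4) (m / (12 * lam)), lt_min (by norm_num) (by positivity), ?_⟩
  intro z hz
  have hznn : 0 ≤ -z := by have := hz.2; linarith
  by_cases hcase : z ≤ -δ₀
  · have hzA : z ∈ A := ⟨hz.1, hcase⟩
    have h1 : m ≤ 1 - |S z| := hmin hzA
    have h2 : min (1/4) (m / (12 * lam)) * (-z) ≤ (m / (12 * lam)) * (12 * lam) := by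
      apply mul_le_mul (min_le_right _ _) _ hznn (by positivity)
      have := hz.1; linarith
    rw [div_mul_cancel₀] at h2
    · linarith
    · positivity
  · push_neg at hcase
    have h1 := part1 z hcase hz.2
    have h2 : min (1/4) (m / (12 * lam)) * (-z) ≤ (1/4) * (-z) :=
      mul_le_mul_of_nonneg_right (min_le_left _ _) hznn
    linarith

/-- 3D bound: `Σ_{k∈{1,…,K−1}³} 1/(1 − |S(s_k)|) ≤ C Δt^(−3/2)`
where `Δt = λ/K²` and `s_k = −4ΔtK² Σ_{j=1}^3 sin²(πkⱼ/(2K))`. -/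
theorem series_bound_3d (lam : ℝ) (hlam : 0 < lam) (S : ℝ → ℝ)
    (hcont : ContinuousOn S (Set.Icc (-(12 * lam)) 0))
    (hS0 : S 0 = 1)
    (hSlt : ∀ z ∈ Set.Ico (-(12 * lam)) 0, |S z| < 1)
    (hderiv : HasDerivAt S 1 0) :
    ∃ C > 0, ∀ K : ℕ, 2 ≤ K →
      ∑ k₁ ∈ Finset.Icc 1 (K - 1), ∑ k₂ ∈ Finset.Icc 1 (K - 1),
        ∑ k₃ ∈ Finset.Icc 1 (K - 1),
          1 / (1 - |S (-(4 * (lam / (K : ℝ) ^ 2) * (K : ℝ) ^ 2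
            * (Real.sin (π * (k₁ : ℝ) / (2 * K)) ^ 2
              + Real.sin (π * (k₂ : ℝ) / (2 * K)) ^ 2
              + Real.sin (π * (k₃ : ℝ) / (2 * K)) ^ 2)))|)
        ≤ C * (lam / (K : ℝ) ^ 2) ^ (-(3 : ℝ) / 2) := by
  obtain ⟨c, hcpos, hc⟩ := stab_const' lam hlam S hcont hS0 hSlt hderiv
  refine ⟨9 * lam ^ ((1:ℝ)/2) / (4 * c), by positivity, ?_⟩
  intro K hK
  have hK2 : (2:ℝ) ≤ K := by exact_mod_cast hK
  have hKpos : (0:ℝ) < K := by linarith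
  have hn1 : 1 ≤ K - 1 := by omega
  have hKne : (K:ℝ) ≠ 0 := ne_of_gt hKpos
  -- sine lower bound
  have hsin_lb : ∀ k ∈ Finset.Icc 1 (K-1),
      ((k:ℝ)/(K:ℝ))^2 ≤ Real.sin (π * (k:ℝ) / (2*K))^2 := by
    intro k hk
    obtain ⟨hk1, hk2⟩ := Finset.mem_Icc.mp hk
    have hkK : (k:ℝ) ≤ (K:ℝ) := by exact_mod_cast le_trans hk2 (Nat.sub_le K 1)
    have hk1' : (1:ℝ) ≤ k := by exact_mod_cast hk1
    have hx0 : 0 ≤ π * (k:ℝ) / (2*K) := by positivity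
    have hx1 : π * (k:ℝ) / (2*K) ≤ π/2 := by
      rw [div_le_div_iff₀ (by positivity) (by norm_num)]
      nlinarith [Real.pi_pos]
    have hs := Real.mul_le_sin hx0 hx1
    have he : 2/π * (π * (k:ℝ)/(2*K)) = (k:ℝ)/(K:ℝ) := by
      field_simp
    rw [he] at hs
    exact pow_le_pow_left₀ (by positivity) hs 2
  -- per-term bound
  have hterm : ∀ k₁ ∈ Finset.Icc 1 (K-1), ∀ k₂ ∈ Finset.Icc 1 (K-1), ∀ k₃ ∈ Finset.Icc 1 (K-1),
      1 / (1 - |S (-(4 * (lam / (K : ℝ) ^ 2) * (K : ℝ) ^ 2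
            * (Real.sin (π * (k₁ : ℝ) / (2 * K)) ^ 2
              + Real.sin (π * (k₂ : ℝ) / (2 * K)) ^ 2
              + Real.sin (π * (k₃ : ℝ) / (2 * K)) ^ 2)))|)
      ≤ (K:ℝ)^2/(4*c*lam) * (1 / ((k₁:ℝ)^2 + (k₂:ℝ)^2 + (k₃:ℝ)^2)) := by
    intro k₁ hk₁ k₂ hk₂ k₃ hk₃
    have hq1 : (1:ℝ) ≤ k₁ := by exact_mod_cast (Finset.mem_Icc.mp hk₁).1
    have hq2 : (1:ℝ) ≤ k₂ := by exact_mod_cast (Finset.mem_Icc.mp hk₂).1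
    have hq3 : (1:ℝ) ≤ k₃ := by exact_mod_cast (Finset.mem_Icc.mp hk₃).1
    set σ := Real.sin (π * (k₁ : ℝ) / (2 * K)) ^ 2
              + Real.sin (π * (k₂ : ℝ) / (2 * K)) ^ 2
              + Real.sin (π * (k₃ : ℝ) / (2 * K)) ^ 2 with hσdef
    set q := (k₁:ℝ)^2 + (k₂:ℝ)^2 + (k₃:ℝ)^2 with hqdef
    have hqpos : 0 < q := by positivity
    have harg : 4 * (lam / (K:ℝ)^2) * (K:ℝ)^2 = 4 * lam := by field_simp
    rw [harg]
    have hσlow : q/(K:ℝ)^2 ≤ σ := by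
      have e : q/(K:ℝ)^2 = ((k₁:ℝ)/(K:ℝ))^2 + ((k₂:ℝ)/(K:ℝ))^2 + ((k₃:ℝ)/(K:ℝ))^2 := by
        field_simp
        exact hqdef
      rw [e]
      have := hsin_lb k₁ hk₁
      have := hsin_lb k₂ hk₂
      have := hsin_lb k₃ hk₃
      rw [hσdef]
      linarith
    have hσhigh : σ ≤ 3 := by
      have a1 := Real.sin_sq_le_one (π * (k₁ : ℝ) / (2 * K))
      have a2 := Real.sin_sq_le_one (π * (k₂ : ℝ) / (2 * K))
      have a3 := Real.sin_sq_le_one (π * (k₃ : ℝ) / (2 * K))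
      rw [hσdef]; linarith
    have hσpos : 0 < σ := lt_of_lt_of_le (by positivity) hσlow
    have hmem : -(4*lam*σ) ∈ Set.Ico (-(12*lam)) 0 := by
      constructor
      · nlinarith
      · nlinarith
    have hden := hc _ hmem
    rw [neg_neg] at hden
    have h2 : 1 / (1 - |S (-(4*lam*σ))|) ≤ 1/(c*(4*lam*σ)) :=
      one_div_le_one_div_of_le (by positivity) hden
    have h3 : 1/(c*(4*lam*σ)) ≤ 1/(c*(4*lam*(q/(K:ℝ)^2))) := by
      apply one_div_le_one_div_of_le (by positivity)
      exact mul_le_mul_of_nonneg_left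
        (mul_le_mul_of_nonneg_left hσlow (by positivity : (0:ℝ) ≤ 4*lam)) hcpos.le
    have h4 : 1/(c*(4*lam*(q/(K:ℝ)^2))) = (K:ℝ)^2/(4*c*lam) * (1/q) := by
      field_simp
    calc 1 / (1 - |S (-(4*lam*σ))|) ≤ 1/(c*(4*lam*σ)) := h2
      _ ≤ 1/(c*(4*lam*(q/(K:ℝ)^2))) := h3
      _ = (K:ℝ)^2/(4*c*lam) * (1/q) := h4
  -- RHS computation
  have e1 : ((K:ℝ)^2) ^ ((3:ℝ)/2) = (K:ℝ)^3 := by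
    rw [← Real.rpow_natCast (K:ℝ) 2, ← Real.rpow_mul hKpos.le,
      show ((2:ℕ):ℝ)*((3:ℝ)/2) = ((3:ℕ):ℝ) by norm_num, Real.rpow_natCast]
  have e2 : (lam/(K:ℝ)^2) ^ (-(3:ℝ)/2) = lam ^ (-(3:ℝ)/2) * (K:ℝ)^3 := by
    rw [Real.div_rpow hlam.le (by positivity : (0:ℝ) ≤ (K:ℝ)^2),
      show (-(3:ℝ)/2) = -((3:ℝ)/2) by norm_num,
      Real.rpow_neg (by positivity : (0:ℝ) ≤ (K:ℝ)^2), e1, div_eq_mul_inv, inv_inv]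
  have e3 : lam ^ ((1:ℝ)/2) * lam ^ (-(3:ℝ)/2) = lam⁻¹ := by
    rw [← Real.rpow_add hlam, show (1:ℝ)/2 + -(3:ℝ)/2 = -1 by norm_num, Real.rpow_neg_one]
  have hRHS : 9 * lam ^ ((1:ℝ)/2) / (4*c) * (lam/(K:ℝ)^2) ^ (-(3:ℝ)/2)
      = 9*(K:ℝ)^3/(4*c*lam) := by
    rw [e2]
    calc 9 * lam ^ ((1:ℝ)/2) / (4*c) * (lam ^ (-(3:ℝ)/2) * (K:ℝ)^3)
        = 9 * (K:ℝ)^3 * (lam ^ ((1:ℝ)/2) * lam ^ (-(3:ℝ)/2)) / (4*c) := by ring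
      _ = 9 * (K:ℝ)^3 * lam⁻¹ / (4*c) := by rw [e3]
      _ = 9*(K:ℝ)^3/(4*c*lam) := by
          field_simp
  rw [hRHS]
  have hcast : ((K-1:ℕ):ℝ) ≤ (K:ℝ) := by exact_mod_cast Nat.sub_le K 1
  calc ∑ k₁ ∈ Finset.Icc 1 (K - 1), ∑ k₂ ∈ Finset.Icc 1 (K - 1),
        ∑ k₃ ∈ Finset.Icc 1 (K - 1),
          1 / (1 - |S (-(4 * (lam / (K : ℝ) ^ 2) * (K : ℝ) ^ 2
            * (Real.sin (π * (k₁ : ℝ) / (2 * K)) ^ 2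
              + Real.sin (π * (k₂ : ℝ) / (2 * K)) ^ 2
              + Real.sin (π * (k₃ : ℝ) / (2 * K)) ^ 2)))|)
      ≤ ∑ k₁ ∈ Finset.Icc 1 (K - 1), ∑ k₂ ∈ Finset.Icc 1 (K - 1),
        ∑ k₃ ∈ Finset.Icc 1 (K - 1),
          (K:ℝ)^2/(4*c*lam) * (1 / ((k₁:ℝ)^2 + (k₂:ℝ)^2 + (k₃:ℝ)^2)) := by
        apply Finset.sum_le_sum; intro k₁ hk₁
        apply Finset.sum_le_sum; intro k₂ hk₂
        apply Finset.sum_le_sum; intro k₃ hk₃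
        exact hterm k₁ hk₁ k₂ hk₂ k₃ hk₃
    _ = (K:ℝ)^2/(4*c*lam) * ∑ k₁ ∈ Finset.Icc 1 (K - 1), ∑ k₂ ∈ Finset.Icc 1 (K - 1),
        ∑ k₃ ∈ Finset.Icc 1 (K - 1), 1 / ((k₁:ℝ)^2 + (k₂:ℝ)^2 + (k₃:ℝ)^2) := by
        simp only [← Finset.mul_sum]
    _ ≤ (K:ℝ)^2/(4*c*lam) * (9 * ((K-1:ℕ):ℝ)) := by
        apply mul_le_mul_of_nonneg_left (lattice_sum' (K-1) hn1) (by positivity)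
    _ ≤ 9*(K:ℝ)^3/(4*c*lam) := by
        rw [show 9*(K:ℝ)^3/(4*c*lam) = (K:ℝ)^2/(4*c*lam) * (9*(K:ℝ)) from by ring]
        apply mul_le_mul_of_nonneg_left (by linarith) (by positivity)
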